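/- arXiv:1108.4268 — 3 statements merged into one kernel-verified Lean document; each statement's English description precedes it below -/
import Mathlib

section
/- Let L ⊂ L' be a field extension with L algebraically closed, and let S_L = L[x_1,…,x_n] ⊂ S_{L'} = L'[x_1,…,x_n]. For every prime ideal P ⊂ S_L, the extension P·S_{L'} is a prime ideal of S_{L'}. -/
open TensorProduct

lemma keyPoint (L B : Type*) [Field L] [IsAlgClosed L] [CommRing B] [IsDomain B]
    [Algebra L B] [Algebra.FiniteType L B] (z : B) (hz : z ≠ 0) :
    ∃ ψ : B →ₐ[L] L, ψ z ≠ 0 := by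
  have hBJ : IsJacobsonRing B := isJacobsonRing_of_finiteType (A := L)
  have hrad : (⊥ : Ideal B).jacobson = ⊥ := hBJ.out' _ (Ideal.bot_prime.isRadical)
  have hex : ∃ m : Ideal B, m.IsMaximal ∧ z ∉ m := by
    by_contra hall
    push_neg at hall
    have : z ∈ (⊥ : Ideal B).jacobson :=
      Submodule.mem_sInf.mpr (fun J hJ => hall J hJ.2)
    rw [hrad] at this
    exact hz (by simpa using this)
  obtain ⟨m, hm, hzm⟩ := hex
  haveI : m.IsMaximal := hm
  haveI : Algebra.FiniteType L (B ⧸ m) :=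
    Algebra.FiniteType.trans ‹Algebra.FiniteType L B›
      (Algebra.FiniteType.of_surjective (Ideal.Quotient.mkₐ B m)
        (Ideal.Quotient.mkₐ_surjective B m))
  letI : Field (B ⧸ m) := Ideal.Quotient.field m
  haveI : Module.Finite L (B ⧸ m) := finite_of_finite_type_of_isJacobsonRing L (B ⧸ m)
  haveI : Algebra.IsIntegral L (B ⧸ m) := Algebra.IsIntegral.of_finite L _
  have hsurj : Function.Surjective (algebraMap L (B ⧸ m)) :=
    IsAlgClosed.algebraMap_bijective_of_isIntegral.2
  have hinj : Function.Injective (algebraMap L (B ⧸ m)) := (algebraMap L (B ⧸ m)).injective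
  let e : L ≃ₐ[L] (B ⧸ m) := AlgEquiv.ofBijective (Algebra.ofId L (B ⧸ m)) ⟨hinj, hsurj⟩
  refine ⟨(e.symm.toAlgHom).comp (Ideal.Quotient.mkₐ L m), ?_⟩
  have h1 : Ideal.Quotient.mk m z ≠ 0 := by
    simpa [Ideal.Quotient.eq_zero_iff_mem] using hzm
  simp only [AlgHom.coe_comp, Function.comp_apply, AlgEquiv.toAlgHom_eq_coe, AlgHom.coe_coe]
  intro h
  apply h1
  have := congrArg e h
  simpa using this

set_option maxHeartbeats 1000000 in
set_option synthInstance.maxHeartbeats 400000 in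
lemma noZero (L L' A : Type*) [Field L] [IsAlgClosed L] [Field L'] [Algebra L L']
    [CommRing A] [IsDomain A] [Algebra L A] : NoZeroDivisors (L' ⊗[L] A) := by
  constructor
  intro x y hxy
  by_contra hcon
  push_neg at hcon
  obtain ⟨hx, hy⟩ := hcon
  classical
  let c := Module.Basis.ofVectorSpace L A
  let bb := c.baseChange L'
  let r := bb.repr x
  let r' := bb.repr y
  have hr : r ≠ 0 := by simpa [r] using hx
  have hr' : r' ≠ 0 := by simpa [r'] using hy
  set s : Finset L' := r.support.image r ∪ r'.support.image r' with hs
  set B : Subalgebra L L' := Algebra.adjoin L (↑s : Set L') with hB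
  haveI : Algebra.FiniteType L B := (Subalgebra.fg_iff_finiteType _).mp (Subalgebra.fg_adjoin_finset s)
  haveI : IsDomain B := inferInstance
  have hmem : ∀ k, r k ∈ B := by
    intro k
    by_cases hk : k ∈ r.support
    · exact Algebra.subset_adjoin
        (Finset.mem_coe.mpr (Finset.mem_union_left _ (Finset.mem_image_of_mem r hk)))
    · simp only [Finsupp.notMem_support_iff] at hk
      rw [hk]; exact B.zero_mem
  have hmem' : ∀ k, r' k ∈ B := by
    intro k
    by_cases hk : k ∈ r'.support
    · exact Algebra.subset_adjoin
        (Finset.mem_coe.mpr (Finset.mem_union_right _ (Finset.mem_image_of_mem r' hk)))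
    · simp only [Finsupp.notMem_support_iff] at hk
      rw [hk]; exact B.zero_mem
  let ρ : _ → B := fun k => ⟨r k, hmem k⟩
  let ρ' : _ → B := fun k => ⟨r' k, hmem' k⟩
  let x₀ : B ⊗[L] A := ∑ k ∈ r.support, (ρ k) ⊗ₜ[L] c k
  let y₀ : B ⊗[L] A := ∑ k ∈ r'.support, (ρ' k) ⊗ₜ[L] c k
  let ι' : (B ⊗[L] A) →ₐ[L] (L' ⊗[L] A) := Algebra.TensorProduct.map B.val (AlgHom.id L A)
  have hιinj : Function.Injective ι' := by
    have h2 : Function.Injective (LinearMap.rTensor A (B.val.toLinearMap)) :=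
      Module.Flat.rTensor_preserves_injective_linearMap B.val.toLinearMap Subtype.val_injective
    exact h2
  have hdecx : x = ∑ k ∈ r.support, (r k) ⊗ₜ[L] c k := by
    conv_lhs => rw [← bb.linearCombination_repr x]
    rw [Finsupp.linearCombination_apply, Finsupp.sum]
    refine Finset.sum_congr rfl (fun k hk => ?_)
    rw [Module.Basis.baseChange_apply, TensorProduct.smul_tmul', smul_eq_mul, mul_one]
  have hdecy : y = ∑ k ∈ r'.support, (r' k) ⊗ₜ[L] c k := by
    conv_lhs => rw [← bb.linearCombination_repr y]
    rw [Finsupp.linearCombination_apply, Finsupp.sum]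
    refine Finset.sum_congr rfl (fun k hk => ?_)
    rw [Module.Basis.baseChange_apply, TensorProduct.smul_tmul', smul_eq_mul, mul_one]
  have hx₀ : ι' x₀ = x := by
    rw [map_sum, hdecx]
    exact Finset.sum_congr rfl (fun k hk => by
      rw [Algebra.TensorProduct.map_tmul]; rfl)
  have hy₀ : ι' y₀ = y := by
    rw [map_sum, hdecy]
    exact Finset.sum_congr rfl (fun k hk => by
      rw [Algebra.TensorProduct.map_tmul]; rfl)
  have hxy₀ : x₀ * y₀ = 0 := by
    apply hιinj
    rw [map_mul, hx₀, hy₀, hxy, map_zero]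
  -- dichotomy
  have hdich : ∀ ψ : B →ₐ[L] L,
      (∀ k ∈ r.support, ψ (ρ k) = 0) ∨ (∀ k ∈ r'.support, ψ (ρ' k) = 0) := by
    intro ψ
    let θ : (B ⊗[L] A) →ₐ[L] A :=
      (Algebra.TensorProduct.lid L A).toAlgHom.comp
        (Algebra.TensorProduct.map ψ (AlgHom.id L A))
    have hθx : θ x₀ = ∑ k ∈ r.support, ψ (ρ k) • c k := by
      rw [map_sum]
      exact Finset.sum_congr rfl (fun k hk => by
        simp [θ, Algebra.TensorProduct.map_tmul])
    have hθy : θ y₀ = ∑ k ∈ r'.support, ψ (ρ' k) • c k := by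
      rw [map_sum]
      exact Finset.sum_congr rfl (fun k hk => by
        simp [θ, Algebra.TensorProduct.map_tmul])
    have h0 : θ x₀ * θ y₀ = 0 := by rw [← map_mul, hxy₀, map_zero]
    rcases mul_eq_zero.mp h0 with h | h
    · left
      rw [hθx] at h
      exact fun k hk => linearIndependent_iff'.mp c.linearIndependent _ _ h k hk
    · right
      rw [hθy] at h
      exact fun k hk => linearIndependent_iff'.mp c.linearIndependent _ _ h k hk
  obtain ⟨k₀, hk₀⟩ := Finsupp.support_nonempty_iff.mpr hr
  obtain ⟨l₀, hl₀⟩ := Finsupp.support_nonempty_iff.mpr hr'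
  have hρk : ρ k₀ ≠ 0 := by
    intro h
    exact (Finsupp.mem_support_iff.mp hk₀) (congrArg Subtype.val h)
  have hρl : ρ' l₀ ≠ 0 := by
    intro h
    exact (Finsupp.mem_support_iff.mp hl₀) (congrArg Subtype.val h)
  obtain ⟨ψ, hψ⟩ := keyPoint L B (ρ k₀ * ρ' l₀) (mul_ne_zero hρk hρl)
  rcases hdich ψ with h | h
  · exact hψ (by rw [map_mul, h k₀ hk₀, zero_mul])
  · exact hψ (by rw [map_mul, h l₀ hl₀, mul_zero])
open TensorProduct


set_option maxHeartbeats 1000000 in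
set_option synthInstance.maxHeartbeats 400000 in
lemma auxPrime (L L' : Type*) [Field L] [IsAlgClosed L] [Field L'] [Algebra L L'] (n : ℕ)
    (A : Type*) [CommRing A] [IsDomain A] [Algebra L A]
    (g : MvPolynomial (Fin n) L →ₐ[L] A) (hg : Function.Surjective g) :
    ((RingHom.ker g).map (MvPolynomial.map (algebraMap L L'))).IsPrime := by
  classical
  haveI : NoZeroDivisors (L' ⊗[L] A) := noZero L L' A
  haveI : Nontrivial (L' ⊗[L] A) := by
    let c := Module.Basis.ofVectorSpace L A
    obtain ⟨k⟩ := c.index_nonempty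
    exact nontrivial_of_ne ((c.baseChange L') k) 0 ((c.baseChange L').ne_zero k)
  haveI : IsDomain (L' ⊗[L] A) := NoZeroDivisors.to_isDomain _
  let χ₁ : (L' ⊗[L] MvPolynomial (Fin n) L) →ₐ[L] (L' ⊗[L] A) :=
    Algebra.TensorProduct.map (AlgHom.id L L') g
  have hker₁ : RingHom.ker χ₁ =
      (RingHom.ker g).map (Algebra.TensorProduct.includeRight :
        MvPolynomial (Fin n) L →ₐ[L] L' ⊗[L] MvPolynomial (Fin n) L) :=
    Algebra.TensorProduct.lTensor_ker g hg
  let e : (L' ⊗[L] MvPolynomial (Fin n) L) ≃+* MvPolynomial (Fin n) L' :=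
    (MvPolynomial.algebraTensorAlgEquiv L L').toRingEquiv
  have hcomp : (e : (L' ⊗[L] MvPolynomial (Fin n) L) →+* MvPolynomial (Fin n) L').comp
      ((Algebra.TensorProduct.includeRight :
        MvPolynomial (Fin n) L →ₐ[L] L' ⊗[L] MvPolynomial (Fin n) L) :
          MvPolynomial (Fin n) L →+* L' ⊗[L] MvPolynomial (Fin n) L)
      = MvPolynomial.map (algebraMap L L') := by
    apply MvPolynomial.ringHom_ext
    · intro a
      show (MvPolynomial.algebraTensorAlgEquiv L L') (1 ⊗ₜ[L] MvPolynomial.C a) = _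
      rw [MvPolynomial.algebraTensorAlgEquiv_tmul]
      simp
    · intro i
      show (MvPolynomial.algebraTensorAlgEquiv L L') (1 ⊗ₜ[L] MvPolynomial.X i) = _
      rw [MvPolynomial.algebraTensorAlgEquiv_tmul]
      simp
  haveI hprime : (RingHom.ker χ₁).IsPrime := RingHom.ker_isPrime _
  have key : (RingHom.ker g).map (MvPolynomial.map (algebraMap L L'))
      = Ideal.comap (e.symm : MvPolynomial (Fin n) L' ≃+* L' ⊗[L] MvPolynomial (Fin n) L)
          (RingHom.ker χ₁) := by
    rw [hker₁, Ideal.comap_symm]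
    have h3 : Ideal.map (Algebra.TensorProduct.includeRight :
          MvPolynomial (Fin n) L →ₐ[L] L' ⊗[L] MvPolynomial (Fin n) L) (RingHom.ker g)
        = Ideal.map ((Algebra.TensorProduct.includeRight :
            MvPolynomial (Fin n) L →ₐ[L] L' ⊗[L] MvPolynomial (Fin n) L) :
              MvPolynomial (Fin n) L →+* L' ⊗[L] MvPolynomial (Fin n) L) (RingHom.ker g) := rfl
    have h4 : ∀ J : Ideal (L' ⊗[L] MvPolynomial (Fin n) L),
        Ideal.map e J
          = Ideal.map (e : (L' ⊗[L] MvPolynomial (Fin n) L) →+* MvPolynomial (Fin n) L') J :=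
      fun J => rfl
    rw [h3, h4, Ideal.map_map, hcomp]
  rw [key]
  exact Ideal.IsPrime.comap _

/-- If `L ⊂ L'` is a field extension with `L` algebraically closed, then the extension
of a prime ideal `P ⊂ L[x_1,…,x_n]` to `L'[x_1,…,x_n]` is again prime. -/
theorem stmt_3 (L L' : Type*) [Field L] [IsAlgClosed L] [Field L'] [Algebra L L']
    (n : ℕ) (P : Ideal (MvPolynomial (Fin n) L)) (hP : P.IsPrime) :
    (P.map (MvPolynomial.map (algebraMap L L'))).IsPrime := by
  haveI := hP
  have h : P = RingHom.ker (Ideal.Quotient.mkₐ L P) := (Ideal.Quotient.mkₐ_ker L P).symm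
  rw [h]
  exact auxPrime L L' n _ (Ideal.Quotient.mkₐ L P) (Ideal.Quotient.mkₐ_surjective L P)
end

section
/- Let L ⊂ L' be a field extension with L algebraically closed, and let I ⊂ S_L = L[x_1,…,x_n] be an ideal with minimal primes P_1,…,P_s. Then the minimal primes of the extended ideal I·S_{L'} ⊂ S_{L'} = L'[x_1,…,x_n] are exactly P_1·S_{L'},…,P_s·S_{L'}. -/
open TensorProduct

set_option maxHeartbeats 1000000
set_option synthInstance.maxHeartbeats 1000000

section Aux

variable {L : Type*} [Field L] [IsAlgClosed L]

/-- In a finitely generated domain over an algebraically closed field, any nonzero element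
is detected by some `L`-point. -/
lemma aux_exists_algHom {B : Type*} [CommRing B] [IsDomain B] [Algebra L B]
    [Algebra.FiniteType L B] {b : B} (hb : b ≠ 0) : ∃ φ : B →ₐ[L] L, φ b ≠ 0 := by
  have hJac : IsJacobsonRing B := isJacobsonRing_of_finiteType (A := L)
  have hball : ¬ ∀ m : Ideal B, m.IsMaximal → b ∈ m := by
    intro h
    have hmem : b ∈ Ideal.jacobson (⊥ : Ideal B) := by
      rw [Ideal.jacobson]
      exact Ideal.mem_sInf.mpr fun {J} hJ => h J hJ.2
    rw [← Ideal.radical_eq_jacobson] at hmem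
    have : b ∈ nilradical B := hmem
    rw [nilradical_eq_zero] at this
    exact hb this
  push_neg at hball
  obtain ⟨m, hm, hbm⟩ := hball
  haveI : m.IsMaximal := hm
  letI : Field (B ⧸ m) := Ideal.Quotient.field m
  haveI : Algebra.FiniteType L (B ⧸ m) :=
    Algebra.FiniteType.of_surjective (Ideal.Quotient.mkₐ L m)
      (Ideal.Quotient.mkₐ_surjective L m)
  haveI : Module.Finite L (B ⧸ m) := finite_of_finite_type_of_isJacobsonRing L (B ⧸ m)
  haveI : Algebra.IsAlgebraic L (B ⧸ m) := Algebra.IsAlgebraic.of_finite L _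
  have hsurj : Function.Surjective (algebraMap L (B ⧸ m)) :=
    IsAlgClosed.algebraMap_bijective_of_isIntegral.2
  have hinj : Function.Injective (algebraMap L (B ⧸ m)) := (algebraMap L (B ⧸ m)).injective
  let e : L ≃ₐ[L] (B ⧸ m) := AlgEquiv.ofBijective (Algebra.ofId L (B ⧸ m)) ⟨hinj, hsurj⟩
  refine ⟨e.symm.toAlgHom.comp (Ideal.Quotient.mkₐ L m), ?_⟩
  intro h
  simp only [AlgHom.coe_comp, AlgEquiv.toAlgHom_eq_coe, AlgHom.coe_coe,
    Function.comp_apply, Ideal.Quotient.mkₐ_eq_mk] at h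
  have h2 : (Ideal.Quotient.mk m) b = 0 := by
    have := congrArg e h
    rw [map_zero] at this
    exact (e.apply_symm_apply _).symm.trans this
  exact hbm (Ideal.Quotient.eq_zero_iff_mem.mp h2)

/-- No zero divisors in `B ⊗[L] A` for `B` a f.g. domain over alg. closed `L`, `A` a domain. -/
lemma aux_mul_eq_zero_fg {A B : Type*} [CommRing A] [CommRing B] [IsDomain A] [IsDomain B]
    [Algebra L A] [Algebra L B] [Algebra.FiniteType L B]
    (u v : B ⊗[L] A) (huv : u * v = 0) : u = 0 ∨ v = 0 := by
  classical
  let bA := Module.Basis.ofVectorSpace L A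
  let bT := Algebra.TensorProduct.basis B bA
  have key : ∀ (φ : B →ₐ[L] L) (w : B ⊗[L] A) (i),
      bA.repr ((Algebra.TensorProduct.lift ((Algebra.ofId L A).comp φ) (AlgHom.id L A)
        (fun _ _ => Commute.all _ _)) w) i = φ (bT.repr w i) := by
    intro φ w i
    induction w using TensorProduct.induction_on with
    | zero => simp
    | tmul b a =>
        rw [Algebra.TensorProduct.lift_tmul]
        simp only [AlgHom.coe_comp, Function.comp_apply, AlgHom.coe_id, id_eq]
        have h1 : (Algebra.ofId L A) (φ b) * a = φ b • a := by
          rw [Algebra.smul_def]; rfl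
        rw [h1, map_smul]
        have h2 : bT.repr (b ⊗ₜ[L] a) =
            b • Finsupp.mapRange (algebraMap L B) (map_zero _) (bA.repr a) :=
          Algebra.TensorProduct.basis_repr_tmul bA b a
        rw [h2]
        simp [Finsupp.smul_apply, Finsupp.mapRange_apply, Algebra.smul_def, map_mul,
          φ.commutes, smul_eq_mul, mul_comm]
    | add x y hx hy => simp [map_add, hx, hy]
  have hzero : ∀ i j, bT.repr u i * bT.repr v j = 0 := by
    intro i j
    by_contra hne
    obtain ⟨φ, hφ⟩ := aux_exists_algHom (L := L) hne
    set Φ := Algebra.TensorProduct.lift ((Algebra.ofId L A).comp φ) (AlgHom.id L A)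
      (fun _ _ => Commute.all _ _) with hΦ
    have hmul : Φ u * Φ v = 0 := by rw [← map_mul, huv, map_zero]
    rcases mul_eq_zero.mp hmul with h | h
    · have := key φ u i
      rw [← hΦ, h, map_zero] at this
      simp only [Finsupp.coe_zero, Pi.zero_apply] at this
      exact hφ (by rw [map_mul, ← this, zero_mul])
    · have := key φ v j
      rw [← hΦ, h, map_zero] at this
      simp only [Finsupp.coe_zero, Pi.zero_apply] at this
      exact hφ (by rw [map_mul, ← this, mul_zero])
  by_cases hu : u = 0
  · exact Or.inl hu
  · right
    have hru : bT.repr u ≠ 0 := fun h => hu (by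
      have := congrArg bT.repr.symm h
      rwa [LinearEquiv.symm_apply_apply, map_zero] at this)
    obtain ⟨i, hi⟩ := Finsupp.ne_iff.mp hru
    simp only [Finsupp.coe_zero, Pi.zero_apply] at hi
    have hv : bT.repr v = 0 := by
      ext j
      rcases mul_eq_zero.mp (hzero i j) with h | h
      · exact absurd h hi
      · simpa using h
    have := congrArg bT.repr.symm hv
    rwa [LinearEquiv.symm_apply_apply, map_zero] at this

/-- `K ⊗[L] A` is a domain for `L` algebraically closed, `K` a field extension, `A` a domain. -/
lemma aux_tensor_isDomain (K A : Type*) [Field K] [Algebra L K] [CommRing A] [IsDomain A]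
    [Algebra L A] : IsDomain (K ⊗[L] A) := by
  classical
  have nt : Nontrivial (K ⊗[L] A) := by
    let bA := Module.Basis.ofVectorSpace L A
    haveI : Nonempty (Module.Basis.ofVectorSpaceIndex L A) := bA.index_nonempty
    exact (Algebra.TensorProduct.basis K bA).repr.toEquiv.nontrivial
  haveI : NoZeroDivisors (K ⊗[L] A) := by
    constructor
    intro u v huv
    obtain ⟨Su, hSu⟩ := TensorProduct.exists_finset u
    obtain ⟨Sv, hSv⟩ := TensorProduct.exists_finset v
    set s : Finset K := Su.image Prod.fst ∪ Sv.image Prod.fst with hs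
    set B : Subalgebra L K := Algebra.adjoin L (s : Set K) with hB
    haveI : Algebra.FiniteType L B := (Subalgebra.fg_iff_finiteType B).mp ⟨s, rfl⟩
    let j : B ⊗[L] A →ₐ[L] K ⊗[L] A := Algebra.TensorProduct.map B.val (AlgHom.id L A)
    have hjinj : Function.Injective j := by
      obtain ⟨g, hg⟩ := LinearMap.exists_leftInverse_of_injective B.val.toLinearMap
        (by rw [LinearMap.ker_eq_bot]; exact Subtype.val_injective)
      have hli : ∀ x : B ⊗[L] A, (LinearMap.rTensor A g) (j x) = x := by
        intro x
        induction x using TensorProduct.induction_on with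
        | zero => simp
        | tmul b a =>
            have : j (b ⊗ₜ[L] a) = (B.val b) ⊗ₜ[L] a := rfl
            rw [this, LinearMap.rTensor_tmul]
            have : g (B.val b) = b := by
              have := congrArg (fun (f : B →ₗ[L] B) => f b) hg
              simpa using this
            rw [show g (B.val b) = g (B.val.toLinearMap b) from rfl] at this ⊢
            rw [this]
        | add x y hx hy => rw [map_add, map_add, hx, hy]
      exact Function.LeftInverse.injective hli
    have hmemu : ∀ p ∈ Su, p.1 ∈ B := fun p hp =>
      Algebra.subset_adjoin (by
        simp only [hs, Finset.coe_union, Set.mem_union, Finset.coe_image]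
        exact Or.inl ⟨p, hp, rfl⟩)
    have hmemv : ∀ p ∈ Sv, p.1 ∈ B := fun p hp =>
      Algebra.subset_adjoin (by
        simp only [hs, Finset.coe_union, Set.mem_union, Finset.coe_image]
        exact Or.inr ⟨p, hp, rfl⟩)
    let u' : B ⊗[L] A := ∑ p ∈ Su.attach, (⟨p.1.1, hmemu p.1 p.2⟩ : B) ⊗ₜ[L] p.1.2
    let v' : B ⊗[L] A := ∑ p ∈ Sv.attach, (⟨p.1.1, hmemv p.1 p.2⟩ : B) ⊗ₜ[L] p.1.2
    have hju : j u' = u := by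
      rw [hSu]
      simp only [u', map_sum]
      rw [← Finset.sum_attach Su (fun p => p.1 ⊗ₜ[L] p.2)]
      rfl
    have hjv : j v' = v := by
      rw [hSv]
      simp only [v', map_sum]
      rw [← Finset.sum_attach Sv (fun p => p.1 ⊗ₜ[L] p.2)]
      rfl
    have h0 : u' * v' = 0 := hjinj (by rw [map_mul, hju, hjv, huv, map_zero])
    rcases aux_mul_eq_zero_fg u' v' h0 with h | h
    · left; rw [← hju, h, map_zero]
    · right; rw [← hjv, h, map_zero]
  exact NoZeroDivisors.to_isDomain _

variable {L' : Type*} [Field L'] [Algebra L L'] {n : ℕ}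

/-- Extensions of primes are prime, and contract back to themselves. -/
lemma aux_map_isPrime_and_comap (P : Ideal (MvPolynomial (Fin n) L)) (hP : P.IsPrime) :
    (P.map (MvPolynomial.map (algebraMap L L'))).IsPrime ∧
      (P.map (MvPolynomial.map (algebraMap L L'))).comap
        (MvPolynomial.map (algebraMap L L')) = P := by
  classical
  haveI := hP
  set F : MvPolynomial (Fin n) L →+* MvPolynomial (Fin n) L' :=
    MvPolynomial.map (algebraMap L L') with hF
  let E := MvPolynomial.algebraTensorAlgEquiv (σ := Fin n) L L'
  let g := Algebra.TensorProduct.map (AlgHom.id L L') (Ideal.Quotient.mkₐ L P)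
  haveI := aux_tensor_isDomain (L := L) L' (MvPolynomial (Fin n) L ⧸ P)
  let ψ := g.toRingHom.comp E.symm.toRingEquiv.toRingHom
  have hEsymmF : ∀ p : MvPolynomial (Fin n) L, E.symm (F p) = 1 ⊗ₜ[L] p := by
    intro p
    have : E (1 ⊗ₜ[L] p) = F p := by
      rw [show E (1 ⊗ₜ[L] p) = MvPolynomial.algebraTensorAlgEquiv L L' (1 ⊗ₜ[L] p) from rfl,
        MvPolynomial.algebraTensorAlgEquiv_tmul, one_smul]
    rw [← this, AlgEquiv.symm_apply_apply]
  have hψF : ∀ p : MvPolynomial (Fin n) L,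
      ψ (F p) = 1 ⊗ₜ[L] (Ideal.Quotient.mk P p) := by
    intro p
    show g (E.symm (F p)) = _
    rw [hEsymmF]
    rfl
  have hker : RingHom.ker ψ = P.map F := by
    apply le_antisymm
    · -- hard direction
      intro x hx
      rw [RingHom.mem_ker] at hx
      set PL : Submodule L (MvPolynomial (Fin n) L) := P.restrictScalars L with hPL
      let incl : PL →ₗ[L] MvPolynomial (Fin n) L := PL.subtype
      let q : MvPolynomial (Fin n) L →ₗ[L] (MvPolynomial (Fin n) L ⧸ P) := (Ideal.Quotient.mkₐ L P).toLinearMap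
      have hfg : Function.Exact incl q := by
        intro y
        constructor
        · intro hy
          have : y ∈ P := Ideal.Quotient.eq_zero_iff_mem.mp hy
          exact ⟨⟨y, this⟩, rfl⟩
        · rintro ⟨⟨z, hz⟩, rfl⟩
          exact Ideal.Quotient.eq_zero_iff_mem.mpr hz
      have hq : Function.Surjective q := Ideal.Quotient.mk_surjective
      have hexact := lTensor_exact (R := L) L' hfg hq
      have hgeq : ∀ z : L' ⊗[L] MvPolynomial (Fin n) L, g z = LinearMap.lTensor L' q z := by
        intro z
        induction z using TensorProduct.induction_on with
        | zero => simp
        | tmul l' r => rfl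
        | add x y hx hy => rw [map_add, map_add, hx, hy]
      have hz : LinearMap.lTensor L' q (E.symm x) = 0 := by
        rw [← hgeq]; exact hx
      obtain ⟨y, hy⟩ := (hexact (E.symm x)).mp hz
      have hxy : x = E (LinearMap.lTensor L' incl y) := by
        rw [hy, AlgEquiv.apply_symm_apply]
      rw [hxy]
      clear hxy hy hz hx
      induction y using TensorProduct.induction_on with
      | zero => simp only [map_zero]; exact (P.map F).zero_mem
      | tmul l' p =>
          have h1 : LinearMap.lTensor L' incl (l' ⊗ₜ[L] p) = l' ⊗ₜ[L] (p : MvPolynomial (Fin n) L) :=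
            rfl
          rw [h1]
          have h2 : E (l' ⊗ₜ[L] (p : MvPolynomial (Fin n) L)) = l' • F (p : MvPolynomial (Fin n) L) :=
            MvPolynomial.algebraTensorAlgEquiv_tmul L L' l' _
          rw [h2, Algebra.smul_def]
          exact Ideal.mul_mem_left _ _ (Ideal.mem_map_of_mem F p.2)
      | add x y hx hy =>
          rw [map_add, map_add]
          exact (P.map F).add_mem hx hy
    · rw [Ideal.map_le_iff_le_comap]
      intro p hp
      have : ψ (F p) = 0 := by
        rw [hψF, Ideal.Quotient.eq_zero_iff_mem.mpr hp, tmul_zero]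
      exact this
  have htmul : ∀ a : MvPolynomial (Fin n) L ⧸ P, (1 : L') ⊗ₜ[L] a = 0 → a = 0 := by
    intro a ha
    let bA := Module.Basis.ofVectorSpace L (MvPolynomial (Fin n) L ⧸ P)
    let bT := Algebra.TensorProduct.basis L' bA
    have hrepr : bT.repr ((1 : L') ⊗ₜ[L] a) =
        (1 : L') • Finsupp.mapRange (algebraMap L L') (map_zero _) (bA.repr a) :=
      Algebra.TensorProduct.basis_repr_tmul bA 1 a
    rw [ha, map_zero, one_smul] at hrepr
    have hzero : bA.repr a = 0 := by
      ext i
      have := congrArg (fun f : Module.Basis.ofVectorSpaceIndex L (MvPolynomial (Fin n) L ⧸ P) →₀ L' => f i) hrepr.symm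
      simp only [Finsupp.mapRange_apply, Finsupp.coe_zero, Pi.zero_apply] at this
      exact (algebraMap L L').injective (by rw [this]; simp)
    have := congrArg bA.repr.symm hzero
    rwa [LinearEquiv.symm_apply_apply, map_zero] at this
  constructor
  · rw [← hker]
    exact RingHom.ker_isPrime ψ
  · apply le_antisymm
    · intro r hr
      rw [Ideal.mem_comap, ← hker, RingHom.mem_ker, hψF] at hr
      have := htmul _ hr
      exact Ideal.Quotient.eq_zero_iff_mem.mp this
    · exact Ideal.le_comap_map

end Aux

/-- If `L ⊂ L'` is a field extension with `L` algebraically closed and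
`I ⊂ L[x_1,…,x_n]` is an ideal, then the minimal primes of the extended ideal
`I·L'[x_1,…,x_n]` are exactly the extensions of the minimal primes of `I`. -/
theorem stmt_5 (L L' : Type*) [Field L] [IsAlgClosed L] [Field L'] [Algebra L L']
    (n : ℕ) (I : Ideal (MvPolynomial (Fin n) L)) :
    (I.map (MvPolynomial.map (algebraMap L L'))).minimalPrimes =
      (fun P => P.map (MvPolynomial.map (algebraMap L L'))) '' I.minimalPrimes := by
  set F : MvPolynomial (Fin n) L →+* MvPolynomial (Fin n) L' :=
    MvPolynomial.map (algebraMap L L') with hF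
  ext Q
  constructor
  · intro hQ
    haveI hQp : Q.IsPrime := hQ.1.1
    haveI : (Q.comap F).IsPrime := Ideal.IsPrime.comap F
    have hIle : I ≤ Q.comap F := Ideal.map_le_iff_le_comap.mp hQ.1.2
    obtain ⟨P, hPmin, hPle⟩ := Ideal.exists_minimalPrimes_le hIle
    refine ⟨P, hPmin, ?_⟩
    have hPprime := hPmin.1.1
    obtain ⟨hmapprime, _⟩ := aux_map_isPrime_and_comap (L' := L') P hPprime
    have hle1 : Ideal.map F P ≤ Q := Ideal.map_le_iff_le_comap.mpr hPle
    have hle2 : Q ≤ Ideal.map F P :=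
      hQ.2 ⟨hmapprime, Ideal.map_mono hPmin.1.2⟩ hle1
    exact hle1.antisymm hle2
  · rintro ⟨P, hP, rfl⟩
    have hPprime := hP.1.1
    obtain ⟨hmp, hcomap⟩ := aux_map_isPrime_and_comap (L' := L') P hPprime
    refine ⟨⟨hmp, Ideal.map_mono hP.1.2⟩, ?_⟩
    rintro Q ⟨hQp, hQle⟩ hle
    haveI := hQp
    have h1 : Q.comap F ≤ P := by
      rw [← hcomap]; exact Ideal.comap_mono hle
    have h2 : I ≤ Q.comap F := Ideal.map_le_iff_le_comap.mp hQle
    have h3 : P ≤ Q.comap F := hP.2 ⟨Ideal.IsPrime.comap F, h2⟩ h1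
    exact Ideal.map_le_iff_le_comap.mpr h3
end

section
/- Let K be a field, S = K[x_1,…,x_n] with the standard grading, and let d ∈ ℕ. There are only finitely many monomial ideals of S generated in degrees ≤ d with a prescribed Hilbert function. More precisely: the set of monomial ideals of S having a fixed Hilbert function H : ℕ → ℕ is finite. -/
open MvPolynomial

namespace Stmt13Aux

open Set

variable {α : Type*}

/-- Stabilization rank of a sequence: least index after which it is constant. -/
noncomputable def stabRk [PartialOrder α] (f : ℕ → α) : ℕ :=
  sInf {N | ∀ k, N ≤ k → f k = f N}

lemma exists_stab [PartialOrder α] {s : Set α}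
    (hs : s.PartiallyWellOrderedOn (· ≤ ·)) {f : ℕ → α} (hmem : ∀ n, f n ∈ s)
    (hanti : Antitone f) : ∃ N, ∀ k, N ≤ k → f k = f N := by
  obtain ⟨g, hg⟩ := hs.exists_monotone_subseq (f := f) hmem
  refine ⟨g 0, fun k hk => ?_⟩
  have h1 : f k ≤ f (g 0) := hanti hk
  have h2 : f (g k) ≤ f k := hanti (g.strictMono.le_apply)
  have h3 : f (g 0) ≤ f (g k) := hg 0 k (Nat.zero_le k)
  exact le_antisymm h1 (h3.trans h2)

lemma stab_mem [PartialOrder α] {f : ℕ → α} (hex : ∃ N, ∀ k, N ≤ k → f k = f N) :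
    ∀ k, stabRk f ≤ k → f k = f (stabRk f) :=
  Nat.sInf_mem (hex : {N | ∀ k, N ≤ k → f k = f N}.Nonempty)

lemma stab_zero_const [PartialOrder α] {f : ℕ → α} (hex : ∃ N, ∀ k, N ≤ k → f k = f N)
    (h0 : stabRk f = 0) : ∀ k, f k = f 0 := by
  intro k
  have := stab_mem hex k (by omega)
  rwa [h0] at this

lemma stab_shift [PartialOrder α] {f : ℕ → α} (hex : ∃ N, ∀ k, N ≤ k → f k = f N)
    (h0 : stabRk f ≠ 0) : stabRk (fun k => f (k + 1)) < stabRk f := by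
  have hmem := stab_mem hex
  have hsub : (stabRk f - 1) ∈ {M | ∀ k, M ≤ k → f (k + 1) = f (M + 1)} := by
    intro k hk
    rw [hmem (k + 1) (by omega), hmem (stabRk f - 1 + 1) (by omega)]
  calc stabRk (fun k => f (k + 1)) ≤ stabRk f - 1 := Nat.sInf_le hsub
    _ < stabRk f := by omega

/-- Key lemma: antitone sequences valued in a pwo set are pwo under the pointwise order. -/
theorem antitone_pwo [PartialOrder α] {s : Set α}
    (hs : s.PartiallyWellOrderedOn (· ≤ ·)) :
    {f : ℕ → α | (∀ n, f n ∈ s) ∧ Antitone f}.PartiallyWellOrderedOn (· ≤ ·) := by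
  classical
  rw [Set.PartiallyWellOrderedOn.iff_not_exists_isMinBadSeq stabRk]
  rintro ⟨f, ⟨hfmem, hfbad⟩, hmin⟩
  have hmem : ∀ n k, f n k ∈ s := fun n k => (hfmem n).1 k
  have hanti : ∀ n, Antitone (f n) := fun n => (hfmem n).2
  have hex : ∀ n, ∃ N, ∀ k, N ≤ k → f n k = f n N :=
    fun n => exists_stab hs (hmem n) (hanti n)
  by_cases hZ : {n | stabRk (f n) = 0}.Infinite
  · -- infinitely many constant sequences: extract a good pair directly
    set e := Nat.nth (fun n => stabRk (f n) = 0) with he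
    have hemem : ∀ i, stabRk (f (e i)) = 0 := fun i => Nat.nth_mem_of_infinite hZ i
    have hmono : StrictMono e := Nat.nth_strictMono hZ
    obtain ⟨i, j, hij, hle⟩ := hs.exists_lt (f := fun i => f (e i) 0) (fun i => hmem _ 0)
    refine hfbad (e i) (e j) (hmono hij) ?_
    intro k
    calc f (e i) k = f (e i) 0 := stab_zero_const (hex _) (hemem i) k
      _ ≤ f (e j) 0 := hle
      _ = f (e j) k := (stab_zero_const (hex _) (hemem j) k).symm
  · -- finitely many constant sequences: ranks are positive from some point on
    obtain ⟨n₀, hn₀⟩ : ∃ n₀, ∀ n, n₀ ≤ n → stabRk (f n) ≠ 0 := by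
      obtain ⟨b, hb⟩ := (Set.not_infinite.mp hZ).bddAbove
      exact ⟨b + 1, fun n hn h0 => by
        have := hb h0
        omega⟩
    obtain ⟨g, hg⟩ := hs.exists_monotone_subseq (f := fun i => f (i + n₀) 0)
      (fun i => hmem _ 0)
    set c := g 0 + n₀ with hc
    set G : ℕ → ℕ → α := fun m =>
      if m < c then f m else fun k => f (g (m - c) + n₀) (k + 1) with hG
    have hGbelow : ∀ m, m < c → f m = G m := by
      intro m hm; simp [hG, hm]
    have hGtail : ∀ m, c ≤ m → G m = fun k => f (g (m - c) + n₀) (k + 1) := by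
      intro m hm; simp [hG, Nat.not_lt.mpr hm]
    have hGc : G c = fun k => f c (k + 1) := by
      rw [hGtail c le_rfl]; simp [hc]
    have hrk : stabRk (G c) < stabRk (f c) := by
      rw [hGc]
      exact stab_shift (hex c) (hn₀ c (by omega))
    have hnotbad := hmin c G hGbelow hrk
    rw [Set.PartiallyWellOrderedOn.IsBadSeq] at hnotbad
    push_neg at hnotbad
    have hGmem : ∀ m, G m ∈ {f : ℕ → α | (∀ n, f n ∈ s) ∧ Antitone f} := by
      intro m
      by_cases hm : m < c
      · rw [← hGbelow m hm]; exact hfmem m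
      · rw [hGtail m (Nat.not_lt.mp hm)]
        refine ⟨fun k => hmem _ _, fun k l hkl => hanti _ (by omega)⟩
    obtain ⟨m, n, hmn, hle⟩ := hnotbad hGmem
    -- tail is pointwise below the original
    have htail_le : ∀ q, (fun k => f q (k + 1)) ≤ f q := by
      intro q k
      exact hanti q (by omega)
    by_cases hn : n < c
    · exact hfbad m n hmn (by rwa [hGbelow m (hmn.trans hn), hGbelow n hn])
    · push_neg at hn
      by_cases hm : m < c
      · -- f m ≤ tail (f q) ≤ f q with m < q
        rw [← hGbelow m hm, hGtail n hn] at hle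
        refine hfbad m (g (n - c) + n₀) ?_ (hle.trans (htail_le _))
        have : g 0 ≤ g (n - c) := g.monotone (Nat.zero_le _)
        omega
      · push_neg at hm
        rw [hGtail m hm, hGtail n hn] at hle
        have hlt : g (m - c) + n₀ < g (n - c) + n₀ := by
          have : g (m - c) < g (n - c) := g.strictMono (by omega)
          omega
        refine hfbad _ _ hlt ?_
        intro k
        cases k with
        | zero => exact hg (m - c) (n - c) (by omega)
        | succ k => exact hle k

/-- Upper sets of `Fin n →₀ ℕ`, ordered by reverse inclusion, are partially well-ordered. -/
theorem upper_pwo (n : ℕ) :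
    {U : (Set (Fin n →₀ ℕ))ᵒᵈ | IsUpperSet (OrderDual.ofDual U)}.PartiallyWellOrderedOn
      (· ≤ ·) := by
  induction n with
  | zero =>
    have : Finite (Fin 0 →₀ ℕ) := Finite.of_equiv _ Finsupp.equivFunOnFinite.symm
    exact Set.isPWO_of_finite
  | succ n ih =>
    refine Set.partiallyWellOrderedOn_iff_exists_lt.mpr fun W hW => ?_
    set F : ℕ → (ℕ → (Set (Fin n →₀ ℕ))ᵒᵈ) := fun i k =>
      OrderDual.toDual {a | Finsupp.cons k a ∈ OrderDual.ofDual (W i)} with hF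
    have hcons_mono : ∀ (k l : ℕ) (a b : Fin n →₀ ℕ), k ≤ l → a ≤ b →
        Finsupp.cons k a ≤ Finsupp.cons l b := by
      intro k l a b hkl hab i
      refine Fin.cases ?_ ?_ i
      · simpa using hkl
      · intro i; simpa using hab i
    have hFmem : ∀ i, F i ∈ {f : ℕ → (Set (Fin n →₀ ℕ))ᵒᵈ |
        (∀ k, f k ∈ {U | IsUpperSet (OrderDual.ofDual U)}) ∧ Antitone f} := by
      intro i
      constructor
      · intro k a b hab ha
        exact hW i (hcons_mono k k a b le_rfl hab) ha
      · intro k l hkl a ha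
        exact hW i (hcons_mono k l a a hkl le_rfl) ha
    obtain ⟨i, j, hij, hle⟩ := (antitone_pwo ih).exists_lt (f := F) hFmem
    refine ⟨i, j, hij, ?_⟩
    intro x hx
    have := hle (x 0)
    have hx' : Finsupp.tail x ∈ {a | Finsupp.cons (x 0) a ∈ OrderDual.ofDual (W j)} := by
      simp only [Set.mem_setOf_eq, Finsupp.cons_tail]
      exact hx
    have h3 : Finsupp.cons (x 0) (Finsupp.tail x) ∈ OrderDual.ofDual (W i) := this hx'
    rwa [Finsupp.cons_tail] at h3


section Algebra

variable {K : Type*} [Field K] {n : ℕ}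

/-- The set of exponents of monomials belonging to an ideal. -/
def USet (I : Ideal (MvPolynomial (Fin n) K)) : Set (Fin n →₀ ℕ) :=
  {μ | monomial μ (1 : K) ∈ I}

lemma isUpperSet_USet (I : Ideal (MvPolynomial (Fin n) K)) : IsUpperSet (USet I) := by
  intro μ μ' hle hμ
  have h : monomial μ' (1 : K) = monomial (μ' - μ) 1 * monomial μ 1 := by
    rw [monomial_mul, one_mul, tsub_add_cancel_of_le hle]
  show monomial μ' (1 : K) ∈ I
  rw [h]
  exact I.mul_mem_left _ hμ

lemma span_USet {I : Ideal (MvPolynomial (Fin n) K)}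
    (hI : ∃ M : Set (Fin n →₀ ℕ), I = Ideal.span ((fun ν => monomial ν (1 : K)) '' M)) :
    I = Ideal.span ((fun ν => monomial ν (1 : K)) '' USet I) := by
  obtain ⟨M, hM⟩ := hI
  apply le_antisymm
  · conv_lhs => rw [hM]
    apply Ideal.span_mono
    apply Set.image_mono
    intro ν hν
    show monomial ν (1 : K) ∈ I
    rw [hM]
    exact Ideal.subset_span (Set.mem_image_of_mem _ hν)
  · rw [Ideal.span_le]
    rintro x ⟨μ, hμ, rfl⟩
    exact hμ

lemma mem_of_le_of_hf {I J : Ideal (MvPolynomial (Fin n) K)} (hIJ : I ≤ J)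
    (hfr : ∀ d : ℕ, Module.finrank K
        ((homogeneousSubmodule (Fin n) K d).map (Ideal.Quotient.mkₐ K I).toLinearMap)
      = Module.finrank K
        ((homogeneousSubmodule (Fin n) K d).map (Ideal.Quotient.mkₐ K J).toLinearMap))
    {μ : Fin n →₀ ℕ} (hμ : μ ∈ USet J) : μ ∈ USet I := by
  set d := Finsupp.degree μ with hd
  set V := homogeneousSubmodule (Fin n) K d with hV
  haveI : FiniteDimensional K V := by
    apply Submodule.finiteDimensional_of_le (S₂ := restrictTotalDegree (Fin n) K d)
    intro p hp
    rw [mem_restrictTotalDegree]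
    exact ((mem_homogeneousSubmodule _ _).mp hp).totalDegree_le
  have key : ∀ (I' : Ideal (MvPolynomial (Fin n) K)) (x : V),
      ((Ideal.Quotient.mkₐ K I').toLinearMap ∘ₗ V.subtype) x = 0 ↔
        (x : MvPolynomial (Fin n) K) ∈ I' := by
    intro I' x
    show Ideal.Quotient.mk I' (x : MvPolynomial (Fin n) K) = 0 ↔ _
    exact Ideal.Quotient.eq_zero_iff_mem
  have hrange : ∀ (I' : Ideal (MvPolynomial (Fin n) K)),
      LinearMap.range ((Ideal.Quotient.mkₐ K I').toLinearMap ∘ₗ V.subtype) =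
        V.map (Ideal.Quotient.mkₐ K I').toLinearMap := by
    intro I'
    rw [LinearMap.range_comp, Submodule.range_subtype]
  have hkerIJ : LinearMap.ker ((Ideal.Quotient.mkₐ K I).toLinearMap ∘ₗ V.subtype) ≤ LinearMap.ker ((Ideal.Quotient.mkₐ K J).toLinearMap ∘ₗ V.subtype) := by
    intro x hx
    rw [LinearMap.mem_ker] at hx ⊢
    rw [key J x]
    exact hIJ ((key I x).mp hx)
  have hrkker : Module.finrank K (LinearMap.ker ((Ideal.Quotient.mkₐ K I).toLinearMap ∘ₗ V.subtype)) = Module.finrank K (LinearMap.ker ((Ideal.Quotient.mkₐ K J).toLinearMap ∘ₗ V.subtype)) := by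
    have h1 := LinearMap.finrank_range_add_finrank_ker ((Ideal.Quotient.mkₐ K I).toLinearMap ∘ₗ V.subtype)
    have h2 := LinearMap.finrank_range_add_finrank_ker ((Ideal.Quotient.mkₐ K J).toLinearMap ∘ₗ V.subtype)
    rw [hrange I] at h1
    rw [hrange J] at h2
    have h3 := hfr d
    rw [← hV] at h3
    omega
  have hker_eq : LinearMap.ker ((Ideal.Quotient.mkₐ K I).toLinearMap ∘ₗ V.subtype) = LinearMap.ker ((Ideal.Quotient.mkₐ K J).toLinearMap ∘ₗ V.subtype) :=
    Submodule.eq_of_le_of_finrank_eq hkerIJ hrkker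
  have hhom : monomial μ (1 : K) ∈ V := by
    rw [hV, mem_homogeneousSubmodule d (monomial μ (1:K))]
    exact isHomogeneous_monomial _ hd.symm
  have hmemker : (⟨monomial μ 1, hhom⟩ : V) ∈ LinearMap.ker ((Ideal.Quotient.mkₐ K J).toLinearMap ∘ₗ V.subtype) := by
    rw [LinearMap.mem_ker, key J]
    exact hμ
  rw [← hker_eq, LinearMap.mem_ker, key I] at hmemker
  exact hmemker

end Algebra


end Stmt13Aux

open Stmt13Aux in
set_option maxHeartbeats 2000000 in
/-- There are only finitely many monomial ideals of `K[x_1,…,x_n]` with a prescribed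
Hilbert function `H`, where the Hilbert function of `S/I` in degree `d` is the
`K`-dimension of the image of the degree-`d` homogeneous component under the quotient
map `S → S/I`. -/
theorem stmt_13 (K : Type*) [Field K] (n : ℕ) (H : ℕ → ℕ) :
    {I : Ideal (MvPolynomial (Fin n) K) |
      (∃ M : Set (Fin n →₀ ℕ), I = Ideal.span ((fun ν => monomial ν (1 : K)) '' M)) ∧
      ∀ d : ℕ, Module.finrank K
        ((homogeneousSubmodule (Fin n) K d).map
          (Ideal.Quotient.mkₐ K I).toLinearMap) = H d}.Finite := by
  by_contra hfin
  have hinf : {I : Ideal (MvPolynomial (Fin n) K) |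
      (∃ M : Set (Fin n →₀ ℕ), I = Ideal.span ((fun ν => monomial ν (1 : K)) '' M)) ∧
      ∀ d : ℕ, Module.finrank K
        ((homogeneousSubmodule (Fin n) K d).map
          (Ideal.Quotient.mkₐ K I).toLinearMap) = H d}.Infinite := hfin
  set e := hinf.natEmbedding with he
  obtain ⟨i, j, hij, hle⟩ := (upper_pwo n).exists_lt
    (f := fun i => OrderDual.toDual (USet ((e i : _) : Ideal (MvPolynomial (Fin n) K))))
    (fun i => isUpperSet_USet _)
  have hsub : USet ((e j : _) : Ideal (MvPolynomial (Fin n) K)) ⊆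
      USet ((e i : _) : Ideal (MvPolynomial (Fin n) K)) := hle
  obtain ⟨hMi, hHi⟩ := (e i).2
  obtain ⟨hMj, hHj⟩ := (e j).2
  have hspan_i := span_USet hMi
  have hspan_j := span_USet hMj
  have hIJ : ((e j : _) : Ideal (MvPolynomial (Fin n) K)) ≤ (e i : _) := by
    conv_lhs => rw [hspan_j]
    conv_rhs => rw [hspan_i]
    exact Ideal.span_mono (Set.image_mono hsub)
  have hfr : ∀ d : ℕ, Module.finrank K
        ((homogeneousSubmodule (Fin n) K d).map
          (Ideal.Quotient.mkₐ K ((e j : _) : Ideal (MvPolynomial (Fin n) K))).toLinearMap)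
      = Module.finrank K
        ((homogeneousSubmodule (Fin n) K d).map
          (Ideal.Quotient.mkₐ K ((e i : _) : Ideal (MvPolynomial (Fin n) K))).toLinearMap) := by
    intro d
    rw [hHj d, hHi d]
  have hsub2 : USet ((e i : _) : Ideal (MvPolynomial (Fin n) K)) ⊆
      USet ((e j : _) : Ideal (MvPolynomial (Fin n) K)) :=
    fun μ hμ => mem_of_le_of_hf hIJ hfr hμ
  have heq : ((e i : _) : Ideal (MvPolynomial (Fin n) K)) = (e j : _) := by
    rw [hspan_i, hspan_j, Set.Subset.antisymm hsub2 hsub]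
  exact absurd (e.injective (Subtype.ext heq)) (by omega)
end
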